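/- Let d ∈ ℕ, let B be a d×d complex matrix which is diagonalizable and all of whose eigenvalues have nonpositive real part, and let ψ ∈ ℂ^d satisfy Bψ = 0. Let x₀ ∈ ℝ, let q : [x₀,∞) → ℝ be continuous with q(x) ≥ 0 for all x, and let A : [x₀,∞) → Matrix d d ℂ be continuous with ∫_{x₀}^∞ ‖A(y)‖ dy < ∞. Then there exists a unique bounded continuously differentiable function Φ : [x₀,∞) → ℂ^d such that Φ'(x) = −(q(x)·B + A(x))·Φ(x) for all x ≥ x₀ and Φ(x) → ψ as x → +∞. -/

import Mathlib

open Filter Topology MeasureTheory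

attribute [local instance] Matrix.normedAddCommGroup Matrix.normedSpace

namespace BSEU

variable {d : ℕ}

/-- `P * diag(exp (z dgₖ)) * Pinv`. -/
noncomputable def Gm (P Pinv : Matrix (Fin d) (Fin d) ℂ) (dg : Fin d → ℂ) (z : ℂ) :
    Matrix (Fin d) (Fin d) ℂ :=
  P * (Matrix.diagonal fun k => Complex.exp (z * dg k)) * Pinv

variable {P Pinv : Matrix (Fin d) (Fin d) ℂ} {dg : Fin d → ℂ}

lemma Gm_apply (z : ℂ) (i j : Fin d) :
    Gm P Pinv dg z i j = ∑ k, P i k * Complex.exp (z * dg k) * Pinv k j := by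
  rw [Gm, Matrix.mul_apply]
  exact Finset.sum_congr rfl fun k _ => by rw [Matrix.mul_diagonal]

lemma Gm_zero (hPP : P * Pinv = 1) : Gm P Pinv dg 0 = 1 := by
  simp [Gm, hPP]

lemma Gm_mul (hPP' : Pinv * P = 1) (z w : ℂ) :
    Gm P Pinv dg z * Gm P Pinv dg w = Gm P Pinv dg (z + w) := by
  have : Gm P Pinv dg z * Gm P Pinv dg w
      = P * ((Matrix.diagonal fun k => Complex.exp (z * dg k))
        * (Matrix.diagonal fun k => Complex.exp (w * dg k))) * Pinv := by
    simp only [Gm]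
    rw [show P * (Matrix.diagonal fun k => Complex.exp (z * dg k)) * Pinv
        * (P * (Matrix.diagonal fun k => Complex.exp (w * dg k)) * Pinv)
        = P * (Matrix.diagonal fun k => Complex.exp (z * dg k)) * (Pinv * P)
        * (Matrix.diagonal fun k => Complex.exp (w * dg k)) * Pinv by
      noncomm_ring]
    rw [hPP']
    noncomm_ring
  rw [this, Matrix.diagonal_mul_diagonal]
  simp only [Gm, ← Complex.exp_add, ← add_mul]

lemma Gm_inv_mulVec (hPP : P * Pinv = 1) (hPP' : Pinv * P = 1) (z : ℂ) (v : Fin d → ℂ) :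
    (Gm P Pinv dg (-z)).mulVec ((Gm P Pinv dg z).mulVec v) = v := by
  rw [Matrix.mulVec_mulVec, Gm_mul hPP', neg_add_cancel, Gm_zero hPP, Matrix.one_mulVec]

/-- the matrix `B`. -/
lemma Bm_mul_Gm (hPP' : Pinv * P = 1) (z : ℂ) :
    (P * Matrix.diagonal dg * Pinv) * Gm P Pinv dg z
      = P * (Matrix.diagonal fun k => dg k * Complex.exp (z * dg k)) * Pinv := by
  rw [show P * Matrix.diagonal dg * Pinv * Gm P Pinv dg z
      = P * Matrix.diagonal dg * (Pinv * P)
        * (Matrix.diagonal fun k => Complex.exp (z * dg k)) * Pinv by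
    simp only [Gm]; noncomm_ring]
  rw [hPP']
  rw [show P * Matrix.diagonal dg * 1 * (Matrix.diagonal fun k => Complex.exp (z * dg k)) * Pinv
    = P * (Matrix.diagonal dg * Matrix.diagonal fun k => Complex.exp (z * dg k)) * Pinv by
    noncomm_ring]
  rw [Matrix.diagonal_mul_diagonal]

lemma Gm_mul_Bm (hPP' : Pinv * P = 1) (z : ℂ) :
    Gm P Pinv dg z * (P * Matrix.diagonal dg * Pinv)
      = (P * Matrix.diagonal dg * Pinv) * Gm P Pinv dg z := by
  rw [Bm_mul_Gm hPP']
  rw [show Gm P Pinv dg z * (P * Matrix.diagonal dg * Pinv)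
      = P * ((Matrix.diagonal fun k => Complex.exp (z * dg k)) * Matrix.diagonal dg) * Pinv by
    simp only [Gm]
    rw [show P * (Matrix.diagonal fun k => Complex.exp (z * dg k)) * Pinv
        * (P * Matrix.diagonal dg * Pinv)
        = P * (Matrix.diagonal fun k => Complex.exp (z * dg k)) * (Pinv * P)
        * Matrix.diagonal dg * Pinv by noncomm_ring]
    rw [hPP']; noncomm_ring]
  rw [Matrix.diagonal_mul_diagonal]
  congr 2
  apply congrArg
  funext k; ring

lemma Gm_mulVec_psi (hPP : P * Pinv = 1) (hPP' : Pinv * P = 1) {ψ : Fin d → ℂ}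
    (hψ : (P * Matrix.diagonal dg * Pinv).mulVec ψ = 0) (z : ℂ) :
    (Gm P Pinv dg z).mulVec ψ = ψ := by
  have h1 : (Matrix.diagonal dg).mulVec (Pinv.mulVec ψ) = 0 := by
    have := congrArg (Pinv.mulVec) hψ
    rw [Matrix.mulVec_mulVec] at this
    rw [show Pinv * (P * Matrix.diagonal dg * Pinv) = Matrix.diagonal dg * Pinv by
      rw [show Pinv * (P * Matrix.diagonal dg * Pinv) = (Pinv * P) * Matrix.diagonal dg * Pinv by
        noncomm_ring]
      rw [hPP', one_mul]] at this
    rw [Matrix.mulVec_zero] at this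
    rw [Matrix.mulVec_mulVec]
    exact this
  have h2 : ∀ k, dg k * (Pinv.mulVec ψ) k = 0 := by
    intro k
    have := congrFun h1 k
    simpa [Matrix.mulVec_diagonal] using this
  have h3 : (Matrix.diagonal fun k => Complex.exp (z * dg k)).mulVec (Pinv.mulVec ψ)
      = Pinv.mulVec ψ := by
    funext k
    rw [Matrix.mulVec_diagonal]
    rcases mul_eq_zero.1 (h2 k) with h | h
    · simp [h]
    · simp [h]
  have : (Gm P Pinv dg z).mulVec ψ
      = P.mulVec ((Matrix.diagonal fun k => Complex.exp (z * dg k)).mulVec (Pinv.mulVec ψ)) := by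
    simp [Gm, Matrix.mulVec_mulVec, Matrix.mul_assoc]
  rw [this, h3, Matrix.mulVec_mulVec, hPP, Matrix.one_mulVec]

lemma norm_mulVec_le (M : Matrix (Fin d) (Fin d) ℂ) (v : Fin d → ℂ) :
    ‖M.mulVec v‖ ≤ d * ‖M‖ * ‖v‖ := by
  have h0 : (0:ℝ) ≤ d * ‖M‖ * ‖v‖ := by positivity
  rw [pi_norm_le_iff_of_nonneg h0]
  intro i
  calc ‖M.mulVec v i‖ = ‖∑ j, M i j * v j‖ := by simp [Matrix.mulVec, dotProduct]
    _ ≤ ∑ j, ‖M i j * v j‖ := norm_sum_le _ _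
    _ ≤ ∑ j : Fin d, ‖M‖ * ‖v‖ := by
        refine Finset.sum_le_sum fun j _ => ?_
        rw [norm_mul]
        exact mul_le_mul (Matrix.norm_entry_le_entrywise_sup_norm M)
          (norm_le_pi_norm v j) (norm_nonneg _) (norm_nonneg _)
    _ = d * ‖M‖ * ‖v‖ := by simp [mul_assoc]

lemma PDP_apply (f : Fin d → ℂ) (i j : Fin d) :
    (P * Matrix.diagonal f * Pinv) i j = ∑ k, P i k * f k * Pinv k j := by
  rw [Matrix.mul_apply]
  exact Finset.sum_congr rfl fun k _ => by rw [Matrix.mul_diagonal]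

lemma norm_diag_exp_mulVec_le (hdg : ∀ k, (dg k).re ≤ 0) {t : ℝ} (ht : 0 ≤ t)
    (w : Fin d → ℂ) :
    ‖(Matrix.diagonal fun k => Complex.exp ((t : ℂ) * dg k)).mulVec w‖ ≤ ‖w‖ := by
  rw [pi_norm_le_iff_of_nonneg (norm_nonneg w)]
  intro k
  rw [Matrix.mulVec_diagonal, norm_mul]
  have h1 : ‖Complex.exp ((t : ℂ) * dg k)‖ ≤ 1 := by
    rw [Complex.norm_exp, Real.exp_le_one_iff]
    have : ((t : ℂ) * dg k).re = t * (dg k).re := by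
      simp [Complex.mul_re]
    rw [this]
    exact mul_nonpos_of_nonneg_of_nonpos ht (hdg k)
  calc ‖Complex.exp ((t : ℂ) * dg k)‖ * ‖w k‖ ≤ 1 * ‖w k‖ :=
        mul_le_mul_of_nonneg_right h1 (norm_nonneg _)
    _ = ‖w k‖ := one_mul _
    _ ≤ ‖w‖ := norm_le_pi_norm w k

lemma norm_Gm_mulVec_le (hdg : ∀ k, (dg k).re ≤ 0) {t : ℝ} (ht : 0 ≤ t) (v : Fin d → ℂ) :
    ‖(Gm P Pinv dg (t : ℂ)).mulVec v‖ ≤ (d * ‖P‖) * ((d * ‖Pinv‖) * ‖v‖) := by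
  have heq : (Gm P Pinv dg (t : ℂ)).mulVec v
      = P.mulVec ((Matrix.diagonal fun k => Complex.exp ((t : ℂ) * dg k)).mulVec
          (Pinv.mulVec v)) := by
    simp [Gm, Matrix.mulVec_mulVec, Matrix.mul_assoc]
  rw [heq]
  calc ‖P.mulVec _‖ ≤ d * ‖P‖ * ‖(Matrix.diagonal fun k => Complex.exp ((t : ℂ) * dg k)).mulVec
          (Pinv.mulVec v)‖ := norm_mulVec_le _ _
    _ ≤ d * ‖P‖ * ‖Pinv.mulVec v‖ := by
        refine mul_le_mul_of_nonneg_left (norm_diag_exp_mulVec_le hdg ht _) (by positivity)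
    _ ≤ d * ‖P‖ * (d * ‖Pinv‖ * ‖v‖) := by
        refine mul_le_mul_of_nonneg_left (norm_mulVec_le _ _) (by positivity)

lemma hasDerivWithinAt_mulVec {s : Set ℝ} {x : ℝ} {M : ℝ → Matrix (Fin d) (Fin d) ℂ}
    {M' : Matrix (Fin d) (Fin d) ℂ} {v : ℝ → Fin d → ℂ} {v' : Fin d → ℂ}
    (hM : ∀ i j, HasDerivWithinAt (fun t => M t i j) (M' i j) s x)
    (hv : HasDerivWithinAt v v' s x) :
    HasDerivWithinAt (fun t => (M t).mulVec (v t)) (M'.mulVec (v x) + (M x).mulVec v') s x := by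
  rw [hasDerivWithinAt_pi]
  intro i
  have hcomp : ∀ t, (M t).mulVec (v t) i = ∑ j, M t i j * v t j := by
    intro t; simp [Matrix.mulVec, dotProduct]
  simp only [hcomp]
  have hder : HasDerivWithinAt (fun t => ∑ j, M t i j * v t j)
      (∑ j, (M' i j * v x j + M x i j * v' j)) s x := by
    apply HasDerivWithinAt.fun_sum
    intro j _
    exact (hM i j).mul ((hasDerivWithinAt_pi.1 hv) j)
  refine hder.congr_deriv ?_
  simp [Matrix.mulVec, dotProduct, Finset.sum_add_distrib]

lemma hasDerivWithinAt_Gm_entry {s : Set ℝ} {u : ℝ → ℝ} {u' x : ℝ}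
    (hu : HasDerivWithinAt u u' s x) (i j : Fin d) :
    HasDerivWithinAt (fun t => Gm P Pinv dg ((u t : ℝ) : ℂ) i j)
      ((u' : ℂ) * (P * (Matrix.diagonal fun k => dg k * Complex.exp ((u x : ℂ) * dg k)) * Pinv) i j)
      s x := by
  simp only [Gm_apply, PDP_apply]
  have hder : HasDerivWithinAt (fun t => ∑ k, P i k * Complex.exp (((u t : ℝ) : ℂ) * dg k) * Pinv k j)
      (∑ k, P i k * (((u' : ℂ) * dg k) * Complex.exp (((u x : ℝ) : ℂ) * dg k)) * Pinv k j) s x := by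
    apply HasDerivWithinAt.fun_sum
    intro k _
    have hc : HasDerivWithinAt (fun t => ((u t : ℝ) : ℂ)) (u' : ℂ) s x :=
      Complex.ofRealCLM.hasFDerivAt.comp_hasDerivWithinAt x hu
    have := ((hc.mul_const (dg k)).cexp.const_mul (P i k)).mul_const (Pinv k j)
    refine this.congr_deriv ?_
    ring
  convert hder using 1
  rw [Finset.mul_sum]
  exact Finset.sum_congr rfl fun k _ => by ring

lemma continuous_Gm_entry {u : ℝ → ℝ} (hu : Continuous u) (i j : Fin d) :
    Continuous fun t => Gm P Pinv dg ((u t : ℝ) : ℂ) i j := by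
  simp only [Gm_apply]
  refine continuous_finset_sum _ fun k _ => ?_
  exact (continuous_const.mul (Complex.continuous_exp.comp
    ((Complex.continuous_ofReal.comp hu).mul continuous_const))).mul continuous_const

lemma continuous_mulVec {M : ℝ → Matrix (Fin d) (Fin d) ℂ} {v : ℝ → Fin d → ℂ}
    (hM : ∀ i j, Continuous fun t => M t i j) (hv : Continuous v) :
    Continuous fun t => (M t).mulVec (v t) := by
  refine continuous_pi fun i => ?_
  have hcomp : ∀ t, (M t).mulVec (v t) i = ∑ j, M t i j * v t j := by
    intro t; simp [Matrix.mulVec, dotProduct]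
  simp only [hcomp]
  exact continuous_finset_sum _ fun j _ => (hM i j).mul ((continuous_apply j).comp hv)

section IntegralHelpers

variable {E : Type*} [NormedAddCommGroup E] [NormedSpace ℝ E]

lemma integral_Ici_split {f : ℝ → E} {a b : ℝ} (hab : a ≤ b)
    (hf : IntegrableOn f (Set.Ici a)) :
    ∫ y in Set.Ici a, f y = (∫ y in a..b, f y) + ∫ y in Set.Ici b, f y := by
  rw [integral_Ici_eq_integral_Ioi, integral_Ici_eq_integral_Ioi,
    intervalIntegral.integral_of_le hab, ← setIntegral_union]
  · rw [Set.Ioc_union_Ioi_eq_Ioi hab]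
  · rw [Set.disjoint_left]
    rintro x ⟨_, hx⟩ hx'
    exact absurd hx' (not_lt.2 hx)
  · exact measurableSet_Ioi
  · exact hf.mono_set (Set.Ioc_subset_Icc_self.trans (Set.Icc_subset_Ici_self))
  · exact hf.mono_set fun x hx => le_trans hab (le_of_lt hx)

lemma tendsto_intervalIntegral_Ici {f : ℝ → E} {a : ℝ} (hf : IntegrableOn f (Set.Ici a)) :
    Tendsto (fun b => ∫ y in a..b, f y) atTop (𝓝 (∫ y in Set.Ici a, f y)) := by
  rw [integral_Ici_eq_integral_Ioi]
  exact intervalIntegral_tendsto_integral_Ioi a (hf.mono_set Set.Ioi_subset_Ici_self) tendsto_id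

lemma integrableOn_of_bound {f : ℝ → E} {g : ℝ → ℝ} {s : Set ℝ} (hmeas : MeasurableSet s)
    (hf : ContinuousOn f s) (hg : IntegrableOn g s) (hbound : ∀ y ∈ s, ‖f y‖ ≤ g y) :
    IntegrableOn f s := by
  exact Integrable.mono' hg (hf.aestronglyMeasurable hmeas)
    ((ae_restrict_iff' hmeas).2 (Eventually.of_forall hbound))

end IntegralHelpers

lemma mulVec_setIntegral {d : ℕ} (M : Matrix (Fin d) (Fin d) ℂ) {f : ℝ → Fin d → ℂ}
    {s : Set ℝ} (hf : IntegrableOn f s) :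
    M.mulVec (∫ y in s, f y) = ∫ y in s, M.mulVec (f y) := by
  have := (LinearMap.toContinuousLinearMap (Matrix.mulVecLin M)).integral_comp_comm hf
  simpa [Matrix.mulVecLin_apply] using this.symm

lemma continuousOn_mulVec {d : ℕ} {s : Set ℝ} {M : ℝ → Matrix (Fin d) (Fin d) ℂ}
    {v : ℝ → Fin d → ℂ} (hM : ∀ i j, ContinuousOn (fun t => M t i j) s)
    (hv : ContinuousOn v s) :
    ContinuousOn (fun t => (M t).mulVec (v t)) s := by
  have : ∀ i, ContinuousOn (fun t => (M t).mulVec (v t) i) s := by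
    intro i
    have hcomp : ∀ t, (M t).mulVec (v t) i = ∑ j, M t i j * v t j := by
      intro t; simp [Matrix.mulVec, dotProduct]
    simp only [hcomp]
    exact continuousOn_finset_sum _ fun j _ =>
      (hM i j).mul ((continuous_apply j).comp_continuousOn hv)
  exact continuousOn_pi.2 this

attribute [irreducible] Gm

lemma mulVec_shift {d : ℕ} {G₁ G₂ G₃ M : Matrix (Fin d) (Fin d) ℂ} (h : G₁ * G₂ = G₃)
    (u : Fin d → ℂ) :
    G₁.mulVec ((G₂ * M).mulVec u) = (G₃ * M).mulVec u := by
  rw [Matrix.mulVec_mulVec, ← Matrix.mul_assoc, h]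

set_option maxHeartbeats 1600000 in
theorem core {d : ℕ} (P Pinv : Matrix (Fin d) (Fin d) ℂ) (dg : Fin d → ℂ)
    (hPP : P * Pinv = 1) (hPP' : Pinv * P = 1) (hdg : ∀ k, (dg k).re ≤ 0)
    (ψ : Fin d → ℂ) (hψ : (P * Matrix.diagonal dg * Pinv).mulVec ψ = 0)
    (x₀ : ℝ) (q : ℝ → ℝ) (hq : Continuous q) (hq0 : ∀ x, 0 ≤ q x)
    (A : ℝ → Matrix (Fin d) (Fin d) ℂ) (hA : Continuous A)
    (hAI : IntegrableOn (fun y => ‖A y‖) (Set.Ici x₀)) :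
    ∃ Φ : ℝ → (Fin d → ℂ),
      ((∃ C : ℝ, ∀ x ∈ Set.Ici x₀, ‖Φ x‖ ≤ C) ∧
        (∀ x ∈ Set.Ici x₀, HasDerivWithinAt Φ
          (-(q x • (P * Matrix.diagonal dg * Pinv).mulVec (Φ x)
            + (A x).mulVec (Φ x))) (Set.Ici x₀) x) ∧
        Tendsto Φ atTop (𝓝 ψ)) ∧
      ∀ Φ' : ℝ → (Fin d → ℂ),
        ((∃ C : ℝ, ∀ x ∈ Set.Ici x₀, ‖Φ' x‖ ≤ C) ∧
          (∀ x ∈ Set.Ici x₀, HasDerivWithinAt Φ'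
            (-(q x • (P * Matrix.diagonal dg * Pinv).mulVec (Φ' x)
              + (A x).mulVec (Φ' x))) (Set.Ici x₀) x) ∧
          Tendsto Φ' atTop (𝓝 ψ)) →
        Set.EqOn Φ' Φ (Set.Ici x₀) := by
  classical
  -- constants
  set Bm : Matrix (Fin d) (Fin d) ℂ := P * Matrix.diagonal dg * Pinv with hBm
  set K0 : ℝ := (d * ‖P‖) * (d * ‖Pinv‖) with hK0
  have hK0nn : 0 ≤ K0 := by positivity
  set κ : ℝ := K0 * d + 1 with hκ
  have hκpos : 0 < κ := by positivity
  set c : ℝ := 2 * κ with hc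
  have hcpos : 0 < c := by positivity
  -- basic functions
  set na : ℝ → ℝ := fun y => ‖A y‖ with hna_def
  have hna : Continuous na := hA.norm
  have hna0 : ∀ y, 0 ≤ na y := fun y => norm_nonneg _
  set I₀ : ℝ := ∫ y in Set.Ici x₀, na y with hI₀
  set Q : ℝ → ℝ := fun x => ∫ t in x₀..x, q t with hQ_def
  have hQder : ∀ x, HasDerivAt Q (q x) x := fun x =>
    intervalIntegral.integral_hasDerivAt_right (hq.intervalIntegrable _ _)
      (hq.stronglyMeasurableAtFilter _ _) hq.continuousAt
  have hQcont : Continuous Q :=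
    continuous_iff_continuousAt.2 fun x => (hQder x).continuousAt
  have hQmono : Monotone Q := by
    intro a b hab
    have hadd := intervalIntegral.integral_add_adjacent_intervals (μ := volume)
      (hq.intervalIntegrable x₀ a) (hq.intervalIntegrable a b)
    have hnn : 0 ≤ ∫ t in a..b, q t :=
      intervalIntegral.integral_nonneg hab fun u _ => hq0 u
    simp only [hQ_def]
    rw [← hadd]; linarith
  have hQ0 : ∀ x, x₀ ≤ x → 0 ≤ Q x := by
    intro x hx
    have : Q x₀ = 0 := intervalIntegral.integral_same
    rw [← this]; exact hQmono hx
  set prim : ℝ → ℝ := fun x => ∫ t in x₀..x, na t with hprim_def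
  have hprimder : ∀ x, HasDerivAt prim (na x) x := fun x =>
    intervalIntegral.integral_hasDerivAt_right (hna.intervalIntegrable _ _)
      (hna.stronglyMeasurableAtFilter _ _) hna.continuousAt
  have hprimcont : Continuous prim :=
    continuous_iff_continuousAt.2 fun x => (hprimder x).continuousAt
  set ρ : ℝ → ℝ := fun x => I₀ - prim x with hρ_def
  have hρcont : Continuous ρ := continuous_const.sub hprimcont
  have hρ_eq : ∀ x, x₀ ≤ x → ρ x = ∫ y in Set.Ici x, na y := by
    intro x hx
    have hsplit := integral_Ici_split hx hAI
    simp only [hρ_def, hprim_def]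
    rw [← hI₀] at hsplit
    rw [hsplit]; ring
  have hρ0 : ∀ x, x₀ ≤ x → 0 ≤ ρ x := by
    intro x hx
    rw [hρ_eq x hx]
    exact setIntegral_nonneg measurableSet_Ici fun y _ => hna0 y
  have hρI : ∀ x, x₀ ≤ x → ρ x ≤ I₀ := by
    intro x hx
    have : 0 ≤ prim x := by
      simp only [hprim_def]
      exact intervalIntegral.integral_nonneg hx fun u _ => hna0 u
    simp only [hρ_def]; linarith
  set w : ℝ → ℝ := fun x => Real.exp (c * ρ (max x₀ x)) with hw_def
  have hwcont : Continuous w :=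
    Real.continuous_exp.comp (continuous_const.mul
      (hρcont.comp (continuous_const.max continuous_id)))
  have hw1 : ∀ x, 1 ≤ w x := fun x =>
    Real.one_le_exp (mul_nonneg hcpos.le (hρ0 _ (le_max_left _ _)))
  set W₀ : ℝ := Real.exp (c * I₀) with hW₀
  have hwW : ∀ x, w x ≤ W₀ := fun x =>
    Real.exp_le_exp.2 (mul_le_mul_of_nonneg_left (hρI _ (le_max_left _ _)) hcpos.le)
  have hwpos : ∀ x, 0 < w x := fun x => lt_of_lt_of_le one_pos (hw1 x)
  have hwx : ∀ x, x₀ ≤ x → w x = Real.exp (c * ρ x) := by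
    intro x hx; simp only [hw_def, max_eq_right hx]
  have hW₀pos : 0 < W₀ := Real.exp_pos _
  -- integrability of na and na * w on tails
  have hnaint : ∀ x, x₀ ≤ x → IntegrableOn na (Set.Ici x) :=
    fun x hx => hAI.mono_set (Set.Ici_subset_Ici.2 hx)
  have hnawint : ∀ x, x₀ ≤ x → IntegrableOn (fun y => na y * w y) (Set.Ici x) := by
    intro x hx
    refine integrableOn_of_bound measurableSet_Ici
      (hna.continuousOn.mul hwcont.continuousOn) ((hnaint x hx).mul_const W₀) ?_
    intro y _
    rw [Real.norm_eq_abs, abs_of_nonneg (mul_nonneg (hna0 y) (hwpos y).le)]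
    exact mul_le_mul_of_nonneg_left (hwW y) (hna0 y)
  -- the key exponential-weight estimate
  have hE : ∀ x, x₀ ≤ x → (∫ y in Set.Ici x, na y * w y) ≤ w x / c := by
    intro x hx
    set F : ℝ → ℝ := fun t => -Real.exp (c * ρ t) / c with hF
    have hFder : ∀ t, HasDerivAt F (na t * Real.exp (c * ρ t)) t := by
      intro t
      have h1 : HasDerivAt ρ (-(na t)) t := (hprimder t).const_sub I₀
      have h2 : HasDerivAt (fun u => c * ρ u) (c * -(na t)) t := h1.const_mul c
      have h3 : HasDerivAt (fun u => Real.exp (c * ρ u))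
          (Real.exp (c * ρ t) * (c * -(na t))) t := h2.exp
      have h4 := (h3.neg).div_const c
      refine h4.congr_deriv ?_
      rw [div_eq_iff hcpos.ne']
      ring
    have hcont2 : Continuous fun t => na t * Real.exp (c * ρ t) :=
      hna.mul (Real.continuous_exp.comp (continuous_const.mul hρcont))
    have hbnd : ∀ T, x ≤ T → (∫ t in x..T, na t * w t) ≤ w x / c := by
      intro T hT
      have h1 : (∫ t in x..T, na t * w t) = ∫ t in x..T, na t * Real.exp (c * ρ t) := by
        apply intervalIntegral.integral_congr
        intro y hy
        rw [Set.uIcc_of_le hT] at hy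
        show na y * w y = na y * Real.exp (c * ρ y)
        rw [hwx y (hx.trans hy.1)]
      have h2 : (∫ t in x..T, na t * Real.exp (c * ρ t)) = F T - F x :=
        intervalIntegral.integral_eq_sub_of_hasDerivAt (fun t _ => hFder t)
          (hcont2.intervalIntegrable _ _)
      rw [h1, h2, hwx x hx]
      have h5 : F T - F x = (Real.exp (c * ρ x) - Real.exp (c * ρ T)) / c := by
        simp only [hF]; ring
      rw [h5]
      gcongr
      linarith [Real.exp_pos (c * ρ T)]
    have htends := tendsto_intervalIntegral_Ici (hnawint x hx)
    refine le_of_tendsto htends ?_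
    filter_upwards [eventually_ge_atTop x] with T hT
    exact hbnd T hT
  -- combined matrix bound
  have hGA : ∀ t : ℝ, 0 ≤ t → ∀ y u, ‖(Gm P Pinv dg (t : ℂ) * A y).mulVec u‖
      ≤ κ * (na y * ‖u‖) := by
    intro t ht y u
    rw [← Matrix.mulVec_mulVec]
    calc ‖(Gm P Pinv dg (t : ℂ)).mulVec ((A y).mulVec u)‖
        ≤ (d * ‖P‖) * ((d * ‖Pinv‖) * ‖(A y).mulVec u‖) := norm_Gm_mulVec_le hdg ht _
      _ ≤ (d * ‖P‖) * ((d * ‖Pinv‖) * (d * ‖A y‖ * ‖u‖)) := by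
          refine mul_le_mul_of_nonneg_left (mul_le_mul_of_nonneg_left ?_ (by positivity))
            (by positivity)
          exact norm_mulVec_le _ _
      _ = (K0 * d) * (na y * ‖u‖) := by rw [hK0]; simp only [hna_def]; ring
      _ ≤ κ * (na y * ‖u‖) := by
          refine mul_le_mul_of_nonneg_right ?_ (by positivity)
          rw [hκ]; linarith
  -- the Banach space and the operator
  have hGmQcont : ∀ i j, Continuous fun y => Gm P Pinv dg ((Q y : ℝ) : ℂ) i j :=
    fun i j => continuous_Gm_entry hQcont i j
  set J : BoundedContinuousFunction ℝ (Fin d → ℂ) → ℝ → (Fin d → ℂ) :=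
    fun Θ y => (Gm P Pinv dg ((Q y : ℝ) : ℂ) * A y).mulVec (w y • Θ y) with hJ_def
  have hJcont : ∀ Θ, Continuous (J Θ) := by
    intro Θ
    refine continuous_mulVec ?_ (hwcont.smul Θ.continuous)
    intro i j
    simp only [Matrix.mul_apply]
    refine continuous_finset_sum _ fun k _ => (hGmQcont i k).mul ?_
    exact (continuous_apply j).comp ((continuous_apply k).comp hA)
  have hJbound : ∀ Θ y, x₀ ≤ y → ‖J Θ y‖ ≤ (κ * ‖Θ‖) * (na y * w y) := by
    intro Θ y hy
    calc ‖J Θ y‖ ≤ κ * (na y * ‖w y • Θ y‖) := hGA (Q y) (hQ0 y hy) y _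
      _ ≤ κ * (na y * (w y * ‖Θ‖)) := by
          refine mul_le_mul_of_nonneg_left (mul_le_mul_of_nonneg_left ?_ (hna0 y)) hκpos.le
          rw [norm_smul, Real.norm_eq_abs, abs_of_nonneg (hwpos y).le]
          exact mul_le_mul_of_nonneg_left (Θ.norm_coe_le_norm y) (hwpos y).le
      _ = (κ * ‖Θ‖) * (na y * w y) := by ring
  have hJint : ∀ Θ x, x₀ ≤ x → IntegrableOn (J Θ) (Set.Ici x) := by
    intro Θ x hx
    refine integrableOn_of_bound measurableSet_Ici (hJcont Θ).continuousOn
      ((hnawint x hx).const_mul (κ * ‖Θ‖)) ?_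
    intro y hy
    exact hJbound Θ y (hx.trans hy)
  set Hf : BoundedContinuousFunction ℝ (Fin d → ℂ) → ℝ → (Fin d → ℂ) :=
    fun Θ x => ∫ y in Set.Ici (max x₀ x), J Θ y with hHf_def
  have hHfeq : ∀ Θ x, Hf Θ x
      = (∫ y in Set.Ici x₀, J Θ y) - ∫ y in x₀..(max x₀ x), J Θ y := by
    intro Θ x
    have := integral_Ici_split (le_max_left x₀ x) (hJint Θ x₀ le_rfl)
    simp only [hHf_def]
    rw [this]; abel
  have hHfcont : ∀ Θ, Continuous (Hf Θ) := by
    intro Θ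
    have : Continuous fun x => ∫ y in x₀..(max x₀ x), J Θ y :=
      (intervalIntegral.continuous_primitive
        (fun a b => (hJcont Θ).intervalIntegrable a b) x₀).comp
        (continuous_const.max continuous_id)
    simp only [funext (hHfeq Θ)]
    exact continuous_const.sub this
  set Tf : BoundedContinuousFunction ℝ (Fin d → ℂ) → ℝ → (Fin d → ℂ) :=
    fun Θ x => (w x)⁻¹ • (ψ + (Gm P Pinv dg ((-Q (max x₀ x) : ℝ) : ℂ)).mulVec (Hf Θ x))
    with hTf_def
  -- master bound
  have hmaster : ∀ Θ x,
      ‖(Gm P Pinv dg ((-Q (max x₀ x) : ℝ) : ℂ)).mulVec (Hf Θ x)‖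
        ≤ (κ * ‖Θ‖) * ∫ y in Set.Ici (max x₀ x), na y * w y := by
    intro Θ x
    set m := max x₀ x with hm_def
    have hm : x₀ ≤ m := le_max_left _ _
    have hrw : Hf Θ x = ∫ y in Set.Ici m, J Θ y := rfl
    rw [hrw, mulVec_setIntegral _ (hJint Θ m hm)]
    rw [← MeasureTheory.integral_const_mul]
    refine (norm_integral_le_of_norm_le (((hnawint m hm)).const_mul (κ * ‖Θ‖)) ?_)
    rw [ae_restrict_iff' measurableSet_Ici]
    refine Eventually.of_forall fun y hy => ?_
    have hy' : x₀ ≤ y := hm.trans hy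
    have hGG : Gm P Pinv dg ((-Q m : ℝ) : ℂ) * Gm P Pinv dg ((Q y : ℝ) : ℂ)
        = Gm P Pinv dg ((Q y - Q m : ℝ) : ℂ) := by
      have harg : ((-Q m : ℝ) : ℂ) + ((Q y : ℝ) : ℂ) = ((Q y - Q m : ℝ) : ℂ) := by
        push_cast; ring
      rw [Gm_mul hPP', harg]
    have hkey : (Gm P Pinv dg ((-Q m : ℝ) : ℂ)).mulVec (J Θ y)
        = (Gm P Pinv dg ((Q y - Q m : ℝ) : ℂ) * A y).mulVec (w y • Θ y) :=
      mulVec_shift hGG (w y • Θ y)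
    rw [hkey]
    have hQge : 0 ≤ Q y - Q m := sub_nonneg.2 (hQmono hy)
    calc ‖(Gm P Pinv dg ((Q y - Q m : ℝ) : ℂ) * A y).mulVec (w y • Θ y)‖
        ≤ κ * (na y * ‖w y • Θ y‖) := hGA _ hQge y _
      _ ≤ κ * (na y * (w y * ‖Θ‖)) := by
          refine mul_le_mul_of_nonneg_left (mul_le_mul_of_nonneg_left ?_ (hna0 y)) hκpos.le
          rw [norm_smul, Real.norm_eq_abs, abs_of_nonneg (hwpos y).le]
          exact mul_le_mul_of_nonneg_left (Θ.norm_coe_le_norm y) (hwpos y).le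
      _ = (κ * ‖Θ‖) * (na y * w y) := by ring
  have hwmax : ∀ x, w (max x₀ x) = w x := by
    intro x
    simp only [hw_def, ← max_assoc, max_self]
  have hmaster2 : ∀ Θ x,
      ‖(Gm P Pinv dg ((-Q (max x₀ x) : ℝ) : ℂ)).mulVec (Hf Θ x)‖
        ≤ ‖Θ‖ * (w x / 2) := by
    intro Θ x
    have h1 := hmaster Θ x
    have h2 := hE (max x₀ x) (le_max_left _ _)
    rw [hwmax x] at h2
    calc ‖(Gm P Pinv dg ((-Q (max x₀ x) : ℝ) : ℂ)).mulVec (Hf Θ x)‖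
        ≤ (κ * ‖Θ‖) * ∫ y in Set.Ici (max x₀ x), na y * w y := h1
      _ ≤ (κ * ‖Θ‖) * (w x / c) := by
          refine mul_le_mul_of_nonneg_left h2 (by positivity)
      _ = ‖Θ‖ * (w x / 2) := by
          rw [hc]; field_simp
  have hTbound : ∀ Θ x, ‖Tf Θ x‖ ≤ ‖ψ‖ + W₀ * ‖Θ‖ := by
    intro Θ x
    simp only [hTf_def]
    rw [norm_smul, Real.norm_eq_abs, abs_of_nonneg (inv_nonneg.2 (hwpos x).le)]
    have hinv1 : (w x)⁻¹ ≤ 1 := by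
      rw [inv_le_one_iff₀]; right; exact hw1 x
    calc (w x)⁻¹ * ‖ψ + (Gm P Pinv dg ((-Q (max x₀ x) : ℝ) : ℂ)).mulVec (Hf Θ x)‖
        ≤ 1 * ‖ψ + (Gm P Pinv dg ((-Q (max x₀ x) : ℝ) : ℂ)).mulVec (Hf Θ x)‖ := by
          refine mul_le_mul_of_nonneg_right hinv1 (norm_nonneg _)
      _ = ‖ψ + (Gm P Pinv dg ((-Q (max x₀ x) : ℝ) : ℂ)).mulVec (Hf Θ x)‖ := one_mul _
      _ ≤ ‖ψ‖ + ‖(Gm P Pinv dg ((-Q (max x₀ x) : ℝ) : ℂ)).mulVec (Hf Θ x)‖ :=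
          norm_add_le _ _
      _ ≤ ‖ψ‖ + ‖Θ‖ * (w x / 2) := by
          exact add_le_add le_rfl (hmaster2 Θ x)
      _ ≤ ‖ψ‖ + W₀ * ‖Θ‖ := by
          have h3 : w x / 2 ≤ W₀ := by
            have := hwW x
            have := hwpos x
            linarith
          have : ‖Θ‖ * (w x / 2) ≤ ‖Θ‖ * W₀ :=
            mul_le_mul_of_nonneg_left h3 (norm_nonneg _)
          linarith
  have hTcont : ∀ Θ, Continuous (Tf Θ) := by
    intro Θ
    refine Continuous.smul (Continuous.inv₀ hwcont fun x => (hwpos x).ne') ?_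
    refine continuous_const.add (continuous_mulVec ?_ (hHfcont Θ))
    intro i j
    exact continuous_Gm_entry ((hQcont.comp (continuous_const.max continuous_id)).neg) i j
  set T : BoundedContinuousFunction ℝ (Fin d → ℂ) → BoundedContinuousFunction ℝ (Fin d → ℂ) :=
    fun Θ => BoundedContinuousFunction.ofNormedAddCommGroup (Tf Θ) (hTcont Θ) _ (hTbound Θ)
    with hT_def
  have hTapp : ∀ Θ x, T Θ x = Tf Θ x := fun Θ x => rfl
  have hHfsub : ∀ (Θ₁ Θ₂ : BoundedContinuousFunction ℝ (Fin d → ℂ)) x,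
      Hf Θ₁ x - Hf Θ₂ x = Hf (Θ₁ - Θ₂) x := by
    intro Θ₁ Θ₂ x
    have hJsub : ∀ y, J (Θ₁ - Θ₂) y = J Θ₁ y - J Θ₂ y := by
      intro y
      simp only [hJ_def, BoundedContinuousFunction.coe_sub, Pi.sub_apply, smul_sub,
        Matrix.mulVec_sub]
    simp only [hHf_def, hJsub]
    rw [integral_sub (hJint Θ₁ _ (le_max_left _ _)) (hJint Θ₂ _ (le_max_left _ _))]
  have hTdiff : ∀ (Θ₁ Θ₂ : BoundedContinuousFunction ℝ (Fin d → ℂ)) x,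
      Tf Θ₁ x - Tf Θ₂ x
        = (w x)⁻¹ • ((Gm P Pinv dg ((-Q (max x₀ x) : ℝ) : ℂ)).mulVec (Hf (Θ₁ - Θ₂) x)) := by
    intro Θ₁ Θ₂ x
    simp only [hTf_def]
    rw [← smul_sub]
    congr 1
    rw [add_sub_add_left_eq_sub, ← Matrix.mulVec_sub, hHfsub]
  have hcontr : ContractingWith (1/2 : NNReal) T := by
    constructor
    · rw [← NNReal.coe_lt_coe]; norm_num
    · refine LipschitzWith.of_dist_le_mul fun Θ₁ Θ₂ => ?_
      have hhalf : ((1/2 : NNReal) : ℝ) = 1/2 := by norm_num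
      rw [hhalf, BoundedContinuousFunction.dist_le (by positivity)]
      intro x
      rw [dist_eq_norm]
      have : T Θ₁ x - T Θ₂ x = Tf Θ₁ x - Tf Θ₂ x := rfl
      rw [this, hTdiff Θ₁ Θ₂ x, norm_smul, Real.norm_eq_abs,
        abs_of_nonneg (inv_nonneg.2 (hwpos x).le)]
      calc (w x)⁻¹ * ‖(Gm P Pinv dg ((-Q (max x₀ x) : ℝ) : ℂ)).mulVec (Hf (Θ₁ - Θ₂) x)‖
          ≤ (w x)⁻¹ * (‖Θ₁ - Θ₂‖ * (w x / 2)) := by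
            refine mul_le_mul_of_nonneg_left (hmaster2 _ x) (inv_nonneg.2 (hwpos x).le)
        _ = ‖Θ₁ - Θ₂‖ * ((w x)⁻¹ * w x) / 2 := by ring
        _ = ‖Θ₁ - Θ₂‖ / 2 := by rw [inv_mul_cancel₀ (hwpos x).ne']; ring
        _ = 1/2 * dist Θ₁ Θ₂ := by rw [dist_eq_norm]; ring
  -- fixed point
  set Θ : BoundedContinuousFunction ℝ (Fin d → ℂ) := ContractingWith.fixedPoint T hcontr
    with hΘ_def
  have hfix : T Θ = Θ := hcontr.fixedPoint_isFixedPt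
  -- the solution
  set IJ : Fin d → ℂ := ∫ y in Set.Ici x₀, J Θ y with hIJ_def
  set Hg : ℝ → (Fin d → ℂ) := fun x => IJ - ∫ t in x₀..x, J Θ t with hHg_def
  have hHg_eq : ∀ x, x₀ ≤ x → Hg x = Hf Θ x := by
    intro x hx
    rw [hHfeq Θ x, max_eq_right hx]
  set Φ : ℝ → (Fin d → ℂ) :=
    fun x => ψ + (Gm P Pinv dg ((-Q x : ℝ) : ℂ)).mulVec (Hg x) with hΦ_def
  have hΦf : ∀ x, x₀ ≤ x → Φ x = w x • Θ x := by
    intro x hx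
    have h1 : (T Θ) x = Θ x := by rw [hfix]
    have h2 : Θ x = Tf Θ x := by rw [← h1]; exact hTapp Θ x
    have h3 : Tf Θ x = (w x)⁻¹ • (ψ + (Gm P Pinv dg ((-Q x : ℝ) : ℂ)).mulVec (Hg x)) := by
      simp only [hTf_def]
      rw [hHg_eq x hx]
      rw [show max x₀ x = x from max_eq_right hx]
    rw [h2, h3]
    rw [smul_inv_smul₀ (hwpos x).ne']
  have hΦbound : ∀ x ∈ Set.Ici x₀, ‖Φ x‖ ≤ W₀ * ‖Θ‖ := by
    intro x hx
    rw [hΦf x hx, norm_smul, Real.norm_eq_abs, abs_of_nonneg (hwpos x).le]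
    exact mul_le_mul (hwW x) (Θ.norm_coe_le_norm x) (norm_nonneg _) hW₀pos.le
  have hgΦ : ∀ y, x₀ ≤ y →
      J Θ y = (Gm P Pinv dg ((Q y : ℝ) : ℂ) * A y).mulVec (Φ y) := by
    intro y hy
    rw [hΦf y hy]
  -- the ODE
  have hODE : ∀ x ∈ Set.Ici x₀, HasDerivWithinAt Φ
      (-(q x • Bm.mulVec (Φ x) + (A x).mulVec (Φ x))) (Set.Ici x₀) x := by
    intro x hx
    have hHgder : HasDerivAt Hg (-(J Θ x)) x := by
      have h := intervalIntegral.integral_hasDerivAt_right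
        ((hJcont Θ).intervalIntegrable x₀ x)
        ((hJcont Θ).stronglyMeasurableAtFilter _ _) (hJcont Θ).continuousAt
      exact h.const_sub IJ
    set M' : Matrix (Fin d) (Fin d) ℂ :=
      ((-(q x) : ℝ) : ℂ) • (P * (Matrix.diagonal fun k =>
        dg k * Complex.exp (((-Q x : ℝ) : ℂ) * dg k)) * Pinv) with hM'_def
    have hGder : ∀ i j, HasDerivWithinAt
        (fun t => Gm P Pinv dg ((-Q t : ℝ) : ℂ) i j) (M' i j) (Set.Ici x₀) x := by
      intro i j
      have := hasDerivWithinAt_Gm_entry (P := P) (Pinv := Pinv) (dg := dg) (s := Set.Ici x₀)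
        (u := fun t => -Q t) (((hQder x).neg).hasDerivWithinAt (s := Set.Ici x₀)) i j
      simpa [hM'_def, Matrix.smul_apply, smul_eq_mul] using this
    have hmv := hasDerivWithinAt_mulVec hGder hHgder.hasDerivWithinAt
    have htot : HasDerivWithinAt Φ
        (M'.mulVec (Hg x) + (Gm P Pinv dg ((-Q x : ℝ) : ℂ)).mulVec (-(J Θ x)))
        (Set.Ici x₀) x := hmv.const_add ψ
    have halg : M'.mulVec (Hg x) + (Gm P Pinv dg ((-Q x : ℝ) : ℂ)).mulVec (-(J Θ x))
        = -(q x • Bm.mulVec (Φ x) + (A x).mulVec (Φ x)) := by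
      have e1 : M' = ((-(q x) : ℝ) : ℂ) • (Bm * Gm P Pinv dg ((-Q x : ℝ) : ℂ)) := by
        rw [hM'_def, Bm_mul_Gm hPP']
      have e2 : M'.mulVec (Hg x)
          = ((-(q x) : ℝ) : ℂ) • Bm.mulVec ((Gm P Pinv dg ((-Q x : ℝ) : ℂ)).mulVec (Hg x)) := by
        rw [e1, Matrix.smul_mulVec, ← Matrix.mulVec_mulVec]
      have e3 : (Gm P Pinv dg ((-Q x : ℝ) : ℂ)).mulVec (Hg x) = Φ x - ψ := by
        simp only [hΦ_def]
        rw [add_sub_cancel_left]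
      have e4 : Bm.mulVec (Φ x - ψ) = Bm.mulVec (Φ x) := by
        rw [Matrix.mulVec_sub, hψ, sub_zero]
      have e5 : (Gm P Pinv dg ((-Q x : ℝ) : ℂ)).mulVec (J Θ x) = (A x).mulVec (Φ x) := by
        rw [hgΦ x hx]
        have hGG : Gm P Pinv dg ((-Q x : ℝ) : ℂ) * Gm P Pinv dg ((Q x : ℝ) : ℂ)
            = Gm P Pinv dg 0 := by
          have harg : ((-Q x : ℝ) : ℂ) + ((Q x : ℝ) : ℂ) = 0 := by push_cast; ring
          rw [Gm_mul hPP', harg]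
        rw [mulVec_shift hGG (Φ x), Gm_zero hPP, Matrix.one_mul]
      rw [e2, e3, e4, Matrix.mulVec_neg, e5]
      funext i
      simp only [Pi.add_apply, Pi.neg_apply, Pi.smul_apply, Complex.real_smul,
        smul_eq_mul]
      push_cast
      ring
    rw [← halg]
    exact htot
  -- the limit at infinity
  have hρtend : Tendsto ρ atTop (𝓝 0) := by
    have h1 : Tendsto prim atTop (𝓝 I₀) := tendsto_intervalIntegral_Ici hAI
    have h2 := Tendsto.sub (tendsto_const_nhds : Tendsto (fun _ : ℝ => I₀) atTop (𝓝 I₀)) h1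
    rw [sub_self] at h2
    exact h2
  have hΦlim : Tendsto Φ atTop (𝓝 ψ) := by
    rw [tendsto_iff_norm_sub_tendsto_zero]
    have hbound : ∀ x, x₀ ≤ x → ‖Φ x - ψ‖ ≤ ((κ * ‖Θ‖) * W₀) * ρ x := by
      intro x hx
      have h0 : Φ x - ψ = (Gm P Pinv dg ((-Q x : ℝ) : ℂ)).mulVec (Hg x) := by
        simp only [hΦ_def]; rw [add_sub_cancel_left]
      rw [h0, hHg_eq x hx]
      have h1 : ‖(Gm P Pinv dg ((-Q x : ℝ) : ℂ)).mulVec (Hf Θ x)‖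
          ≤ (κ * ‖Θ‖) * ∫ y in Set.Ici x, na y * w y := by
        have := hmaster Θ x
        rw [show max x₀ x = x from max_eq_right hx] at this
        exact this
      have h2 : (∫ y in Set.Ici x, na y * w y) ≤ W₀ * ρ x := by
        have hle : ∀ y ∈ Set.Ici x, na y * w y ≤ W₀ * na y := by
          intro y _
          rw [mul_comm W₀ (na y)]
          exact mul_le_mul_of_nonneg_left (hwW y) (hna0 y)
        calc (∫ y in Set.Ici x, na y * w y) ≤ ∫ y in Set.Ici x, W₀ * na y :=
              setIntegral_mono_on (hnawint x hx) ((hnaint x hx).const_mul W₀)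
                measurableSet_Ici hle
          _ = W₀ * ∫ y in Set.Ici x, na y := MeasureTheory.integral_const_mul _ _
          _ = W₀ * ρ x := by rw [hρ_eq x hx]
      calc ‖(Gm P Pinv dg ((-Q x : ℝ) : ℂ)).mulVec (Hf Θ x)‖
          ≤ (κ * ‖Θ‖) * (W₀ * ρ x) := le_trans h1
            (mul_le_mul_of_nonneg_left h2 (by positivity))
        _ = ((κ * ‖Θ‖) * W₀) * ρ x := by ring
    have hb : ∀ᶠ x in atTop, ‖Φ x - ψ‖ ≤ ((κ * ‖Θ‖) * W₀) * ρ x := by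
      filter_upwards [eventually_ge_atTop x₀] with x hx
      exact hbound x hx
    have ht : Tendsto (fun x => ((κ * ‖Θ‖) * W₀) * ρ x) atTop (𝓝 0) := by
      have := hρtend.const_mul ((κ * ‖Θ‖) * W₀)
      rwa [mul_zero] at this
    exact squeeze_zero' (Eventually.of_forall fun x => norm_nonneg _) hb ht
  refine ⟨Φ, ⟨⟨W₀ * ‖Θ‖, hΦbound⟩, hODE, hΦlim⟩, ?_⟩
  rintro Φ₂ ⟨⟨C₂, hC₂⟩, hode₂, hlim₂⟩
  have hC₂0 : 0 ≤ C₂ := (norm_nonneg _).trans (hC₂ x₀ Set.self_mem_Ici)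
  have hΦ₂cont : ContinuousOn Φ₂ (Set.Ici x₀) := fun x hx =>
    (hode₂ x hx).continuousWithinAt
  set g₂ : ℝ → Fin d → ℂ :=
    fun y => (Gm P Pinv dg ((Q y : ℝ) : ℂ) * A y).mulVec (Φ₂ y) with hg₂_def
  have hg₂contOn : ContinuousOn g₂ (Set.Ici x₀) := by
    refine continuousOn_mulVec ?_ hΦ₂cont
    intro i j
    refine Continuous.continuousOn ?_
    simp only [Matrix.mul_apply]
    refine continuous_finset_sum _ fun k _ => (hGmQcont i k).mul ?_
    exact (continuous_apply j).comp ((continuous_apply k).comp hA)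
  have hg₂bound : ∀ y, x₀ ≤ y → ‖g₂ y‖ ≤ (κ * C₂) * na y := by
    intro y hy
    calc ‖g₂ y‖ ≤ κ * (na y * ‖Φ₂ y‖) := hGA (Q y) (hQ0 y hy) y _
      _ ≤ κ * (na y * C₂) := by
          refine mul_le_mul_of_nonneg_left (mul_le_mul_of_nonneg_left ?_ (hna0 y)) hκpos.le
          exact hC₂ y hy
      _ = (κ * C₂) * na y := by ring
  have hg₂int : ∀ x, x₀ ≤ x → IntegrableOn g₂ (Set.Ici x) := by
    intro x hx
    refine integrableOn_of_bound measurableSet_Ici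
      (hg₂contOn.mono (Set.Ici_subset_Ici.2 hx)) (((hnaint x hx)).const_mul (κ * C₂)) ?_
    intro y hy
    exact hg₂bound y (hx.trans hy)
  have hg₂ii : ∀ a b, x₀ ≤ a → x₀ ≤ b → IntervalIntegrable g₂ volume a b := by
    intro a b ha hb
    refine ContinuousOn.intervalIntegrable (hg₂contOn.mono ?_)
    intro t ht
    rcases Set.mem_uIcc.mp ht with ⟨h1, _⟩ | ⟨h1, _⟩
    · exact le_trans ha h1
    · exact le_trans hb h1
  set Wf : ℝ → Fin d → ℂ :=
    fun x => (Gm P Pinv dg ((Q x : ℝ) : ℂ)).mulVec (Φ₂ x) + ∫ t in x₀..x, g₂ t with hWf_def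
  have hprim2der : ∀ x ∈ Set.Ici x₀,
      HasDerivWithinAt (fun u => ∫ t in x₀..u, g₂ t) (g₂ x) (Set.Ici x₀) x := by
    intro x hx
    rcases eq_or_lt_of_le (Set.mem_Ici.1 hx) with heq | hlt
    · subst heq
      exact intervalIntegral.integral_hasDerivWithinAt_right (s := Set.Ici x₀)
        (t := Set.Ioi x₀) (hg₂ii x₀ x₀ le_rfl le_rfl)
        ⟨Set.Ici x₀, mem_of_superset self_mem_nhdsWithin Set.Ioi_subset_Ici_self,
          hg₂contOn.aestronglyMeasurable measurableSet_Ici⟩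
        ((hg₂contOn x₀ Set.self_mem_Ici).mono Set.Ioi_subset_Ici_self)
    · have hmem : Set.Ici x₀ ∈ 𝓝 x :=
        mem_of_superset (Ioi_mem_nhds hlt) Set.Ioi_subset_Ici_self
      have hAt := intervalIntegral.integral_hasDerivAt_right (hg₂ii x₀ x le_rfl hx)
        ⟨Set.Ici x₀, hmem, hg₂contOn.aestronglyMeasurable measurableSet_Ici⟩
        (hg₂contOn.continuousAt hmem)
      exact hAt.hasDerivWithinAt
  have hWder : ∀ x ∈ Set.Ici x₀, HasDerivWithinAt Wf 0 (Set.Ici x₀) x := by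
    intro x hx
    set M2' : Matrix (Fin d) (Fin d) ℂ :=
      ((q x : ℝ) : ℂ) • (P * (Matrix.diagonal fun k =>
        dg k * Complex.exp (((Q x : ℝ) : ℂ) * dg k)) * Pinv) with hM2'_def
    have hGder2 : ∀ i j, HasDerivWithinAt
        (fun t => Gm P Pinv dg ((Q t : ℝ) : ℂ) i j) (M2' i j) (Set.Ici x₀) x := by
      intro i j
      have := hasDerivWithinAt_Gm_entry (P := P) (Pinv := Pinv) (dg := dg) (s := Set.Ici x₀)
        (u := Q) ((hQder x).hasDerivWithinAt (s := Set.Ici x₀)) i j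
      simpa [hM2'_def, Matrix.smul_apply, smul_eq_mul] using this
    have hmv2 := hasDerivWithinAt_mulVec hGder2 (hode₂ x hx)
    have htot2 := hmv2.add (hprim2der x hx)
    have h5 : (Gm P Pinv dg ((Q x : ℝ) : ℂ)).mulVec (Bm.mulVec (Φ₂ x))
        = (Bm * Gm P Pinv dg ((Q x : ℝ) : ℂ)).mulVec (Φ₂ x) := by
      rw [Matrix.mulVec_mulVec, Gm_mul_Bm hPP']
    have h6 : (Gm P Pinv dg ((Q x : ℝ) : ℂ)).mulVec ((A x).mulVec (Φ₂ x)) = g₂ x := by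
      rw [Matrix.mulVec_mulVec]
    have h7 : (Gm P Pinv dg ((Q x : ℝ) : ℂ)).mulVec
          (-(q x • Bm.mulVec (Φ₂ x) + (A x).mulVec (Φ₂ x)))
        = -(q x • (Bm * Gm P Pinv dg ((Q x : ℝ) : ℂ)).mulVec (Φ₂ x) + g₂ x) := by
      rw [Matrix.mulVec_neg, Matrix.mulVec_add, Matrix.mulVec_smul, h5, h6]
    have e2 : M2'.mulVec (Φ₂ x)
        = ((q x : ℝ) : ℂ) • (Bm * Gm P Pinv dg ((Q x : ℝ) : ℂ)).mulVec (Φ₂ x) := by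
      rw [hM2'_def, Bm_mul_Gm hPP', Matrix.smul_mulVec]
    have hzero : M2'.mulVec (Φ₂ x) + (Gm P Pinv dg ((Q x : ℝ) : ℂ)).mulVec
          (-(q x • Bm.mulVec (Φ₂ x) + (A x).mulVec (Φ₂ x))) + g₂ x = 0 := by
      rw [e2, h7]
      funext i
      simp only [Pi.add_apply, Pi.neg_apply, Pi.smul_apply, Pi.zero_apply,
        Complex.real_smul, smul_eq_mul]
      ring
    have : Wf = fun t => (Gm P Pinv dg ((Q t : ℝ) : ℂ)).mulVec (Φ₂ t)
        + ∫ s in x₀..t, g₂ s := rfl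
    rw [this, ← hzero]
    exact htot2
  have hWconst : ∀ x ∈ Set.Ici x₀, Wf x = Wf x₀ := by
    intro x hx
    have h := Convex.norm_image_sub_le_of_norm_hasDerivWithin_le
      (f := Wf) (f' := fun _ => (0 : Fin d → ℂ)) (C := 0) hWder
      (fun y _ => by simp) (convex_Ici x₀) Set.self_mem_Ici hx
    rw [zero_mul] at h
    have := norm_le_zero_iff.1 h
    exact sub_eq_zero.1 this
  have hIg₂ : IntegrableOn g₂ (Set.Ici x₀) := hg₂int x₀ le_rfl
  have hWlim : Tendsto Wf atTop (𝓝 (ψ + ∫ y in Set.Ici x₀, g₂ y)) := by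
    have hid : ∀ x, (Gm P Pinv dg ((Q x : ℝ) : ℂ)).mulVec (Φ₂ x)
        = (Gm P Pinv dg ((Q x : ℝ) : ℂ)).mulVec (Φ₂ x - ψ) + ψ := by
      intro x
      rw [Matrix.mulVec_sub, Gm_mulVec_psi hPP hPP' hψ, sub_add_cancel]
    have hn : Tendsto (fun x => ‖(Gm P Pinv dg ((Q x : ℝ) : ℂ)).mulVec (Φ₂ x - ψ)‖)
        atTop (𝓝 0) := by
      have hb2 : ∀ᶠ x in atTop, ‖(Gm P Pinv dg ((Q x : ℝ) : ℂ)).mulVec (Φ₂ x - ψ)‖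
          ≤ K0 * ‖Φ₂ x - ψ‖ := by
        filter_upwards [eventually_ge_atTop x₀] with x hx
        calc ‖(Gm P Pinv dg ((Q x : ℝ) : ℂ)).mulVec (Φ₂ x - ψ)‖
            ≤ (d * ‖P‖) * ((d * ‖Pinv‖) * ‖Φ₂ x - ψ‖) :=
              norm_Gm_mulVec_le hdg (hQ0 x hx) _
          _ = K0 * ‖Φ₂ x - ψ‖ := by rw [hK0]; ring
      have ht2 : Tendsto (fun x => K0 * ‖Φ₂ x - ψ‖) atTop (𝓝 0) := by
        have := (tendsto_iff_norm_sub_tendsto_zero.1 hlim₂).const_mul K0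
        rwa [mul_zero] at this
      exact squeeze_zero' (Eventually.of_forall fun x => norm_nonneg _) hb2 ht2
    have hpart1 : Tendsto (fun x => (Gm P Pinv dg ((Q x : ℝ) : ℂ)).mulVec (Φ₂ x))
        atTop (𝓝 ψ) := by
      rw [funext hid]
      have h0 : Tendsto (fun x => (Gm P Pinv dg ((Q x : ℝ) : ℂ)).mulVec (Φ₂ x - ψ))
          atTop (𝓝 0) := tendsto_zero_iff_norm_tendsto_zero.2 hn
      have := h0.add (tendsto_const_nhds (x := ψ) (f := atTop))
      rwa [zero_add] at this
    have hpart2 : Tendsto (fun x => ∫ t in x₀..x, g₂ t) atTop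
        (𝓝 (∫ y in Set.Ici x₀, g₂ y)) := tendsto_intervalIntegral_Ici hIg₂
    exact hpart1.add hpart2
  have hW0 : Wf x₀ = ψ + ∫ y in Set.Ici x₀, g₂ y := by
    have hconst : Tendsto Wf atTop (𝓝 (Wf x₀)) := by
      refine Tendsto.congr' ?_ tendsto_const_nhds
      filter_upwards [eventually_ge_atTop x₀] with x hx
      exact (hWconst x hx).symm
    exact tendsto_nhds_unique hconst hWlim
  have hInt2 : ∀ x, x₀ ≤ x →
      (Gm P Pinv dg ((Q x : ℝ) : ℂ)).mulVec (Φ₂ x) = ψ + ∫ y in Set.Ici x, g₂ y := by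
    intro x hx
    have h2 := integral_Ici_split hx hIg₂ (f := g₂)
    have h3 : (Gm P Pinv dg ((Q x : ℝ) : ℂ)).mulVec (Φ₂ x)
        = Wf x - ∫ t in x₀..x, g₂ t := by
      have : Wf x = (Gm P Pinv dg ((Q x : ℝ) : ℂ)).mulVec (Φ₂ x) + ∫ t in x₀..x, g₂ t :=
        rfl
      rw [this, add_sub_cancel_right]
    rw [h3, hWconst x hx, hW0, h2]
    abel
  have hΦ₂eq : ∀ x, x₀ ≤ x →
      Φ₂ x = ψ + (Gm P Pinv dg ((-Q x : ℝ) : ℂ)).mulVec (∫ y in Set.Ici x, g₂ y) := by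
    intro x hx
    have hco : ((-Q x : ℝ) : ℂ) = -((Q x : ℝ) : ℂ) := by push_cast; ring
    have h3 := congrArg (fun v => (Gm P Pinv dg ((-Q x : ℝ) : ℂ)).mulVec v) (hInt2 x hx)
    rw [hco, Gm_inv_mulVec hPP hPP'] at h3
    rw [h3, ← hco, Matrix.mulVec_add, Gm_mulVec_psi hPP hPP' hψ]
  set Θ₂f : ℝ → Fin d → ℂ := fun x => (w x)⁻¹ • Φ₂ (max x₀ x) with hΘ₂f_def
  have hΘ₂cont : Continuous Θ₂f :=
    (hwcont.inv₀ fun x => (hwpos x).ne').smul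
      (hΦ₂cont.comp_continuous (continuous_const.max continuous_id)
        fun x => Set.mem_Ici.2 (le_max_left _ _))
  have hΘ₂bound : ∀ x, ‖Θ₂f x‖ ≤ C₂ := by
    intro x
    simp only [hΘ₂f_def]
    rw [norm_smul, Real.norm_eq_abs, abs_of_nonneg (inv_nonneg.2 (hwpos x).le)]
    have hinv1 : (w x)⁻¹ ≤ 1 := by
      rw [inv_le_one_iff₀]; right; exact hw1 x
    calc (w x)⁻¹ * ‖Φ₂ (max x₀ x)‖ ≤ 1 * C₂ :=
        mul_le_mul hinv1 (hC₂ _ (Set.mem_Ici.2 (le_max_left _ _))) (norm_nonneg _) one_pos.le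
      _ = C₂ := one_mul _
  set Θ₂ : BoundedContinuousFunction ℝ (Fin d → ℂ) :=
    BoundedContinuousFunction.ofNormedAddCommGroup Θ₂f hΘ₂cont C₂ hΘ₂bound with hΘ₂_def
  have hwy_cancel : ∀ y, x₀ ≤ y → w y • Θ₂ y = Φ₂ y := by
    intro y hy
    have : Θ₂ y = (w y)⁻¹ • Φ₂ (max x₀ y) := rfl
    rw [this, max_eq_right hy, smul_inv_smul₀ (hwpos y).ne']
  have hfix₂ : T Θ₂ = Θ₂ := by
    apply BoundedContinuousFunction.ext
    intro x
    have hm : x₀ ≤ max x₀ x := le_max_left _ _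
    have hJg : Set.EqOn (J Θ₂) g₂ (Set.Ici (max x₀ x)) := by
      intro y hy
      have hy' : x₀ ≤ y := hm.trans hy
      simp only [hJ_def, hg₂_def]
      rw [hwy_cancel y hy']
    have h4 : Hf Θ₂ x = ∫ y in Set.Ici (max x₀ x), g₂ y :=
      setIntegral_congr_fun measurableSet_Ici hJg
    have h5 : T Θ₂ x = Tf Θ₂ x := rfl
    rw [h5]
    have h6 : Tf Θ₂ x = (w x)⁻¹ • (ψ + (Gm P Pinv dg ((-Q (max x₀ x) : ℝ) : ℂ)).mulVec
        (∫ y in Set.Ici (max x₀ x), g₂ y)) := by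
      simp only [hTf_def]
      rw [h4]
    rw [h6, ← hΦ₂eq (max x₀ x) hm]
    rfl
  have hΘeq : Θ₂ = Θ := hcontr.fixedPoint_unique hfix₂
  intro x hx
  have h5 : w x • Θ₂ x = w x • Θ x := by rw [hΘeq]
  rw [hwy_cancel x hx] at h5
  rw [h5, ← hΦf x hx]

end BSEU

/-- existence and uniqueness of a bounded solution of
`Φ' = −(q·B + A)·Φ` on `[x₀,∞)` with limit `ψ` at `+∞`, where `B` is
diagonalizable with spectrum in the closed left half-plane, `Bψ = 0`,
`q ≥ 0` is continuous and `A` is continuous and integrable at infinity. -/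
theorem bounded_solution_exists_unique
    (d : ℕ) (B : Matrix (Fin d) (Fin d) ℂ)
    (hdiag : ∃ (P D : Matrix (Fin d) (Fin d) ℂ),
      IsUnit P ∧ D.IsDiag ∧ B = P * D * P⁻¹)
    (hspec : ∀ μ ∈ spectrum ℂ B, μ.re ≤ 0)
    (ψ : Fin d → ℂ) (hψ : B.mulVec ψ = 0)
    (x₀ : ℝ) (q : ℝ → ℝ) (hq : ContinuousOn q (Set.Ici x₀))
    (hq0 : ∀ x ∈ Set.Ici x₀, 0 ≤ q x)
    (A : ℝ → Matrix (Fin d) (Fin d) ℂ) (hA : ContinuousOn A (Set.Ici x₀))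
    (hAint : IntegrableOn (fun y => ‖A y‖) (Set.Ici x₀)) :
    ∃ Φ : ℝ → (Fin d → ℂ),
      ((∃ C : ℝ, ∀ x ∈ Set.Ici x₀, ‖Φ x‖ ≤ C) ∧
        (∀ x ∈ Set.Ici x₀, HasDerivWithinAt Φ
          (-(q x • B.mulVec (Φ x) + (A x).mulVec (Φ x))) (Set.Ici x₀) x) ∧
        Tendsto Φ atTop (𝓝 ψ)) ∧
      ∀ Φ' : ℝ → (Fin d → ℂ),
        ((∃ C : ℝ, ∀ x ∈ Set.Ici x₀, ‖Φ' x‖ ≤ C) ∧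
          (∀ x ∈ Set.Ici x₀, HasDerivWithinAt Φ'
            (-(q x • B.mulVec (Φ' x) + (A x).mulVec (Φ' x))) (Set.Ici x₀) x) ∧
          Tendsto Φ' atTop (𝓝 ψ)) →
        Set.EqOn Φ' Φ (Set.Ici x₀) := by
  classical
  obtain ⟨P, D, hP, hD, hBPD⟩ := hdiag
  have hPdet : IsUnit P.det := (Matrix.isUnit_iff_isUnit_det P).1 hP
  have hPP : P * P⁻¹ = 1 := Matrix.mul_nonsing_inv P hPdet
  have hPP' : P⁻¹ * P = 1 := Matrix.nonsing_inv_mul P hPdet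
  set dg : Fin d → ℂ := fun i => D i i with hdg_def
  have hDdiag : Matrix.diagonal dg = D := hD.diagonal_diag
  have hB : B = P * Matrix.diagonal dg * P⁻¹ := by rw [hDdiag, ← hBPD]
  have hdgre : ∀ i, (dg i).re ≤ 0 := by
    intro i
    apply hspec
    rw [spectrum.mem_iff]
    intro hUnit
    have h1 : algebraMap ℂ (Matrix (Fin d) (Fin d) ℂ) (dg i) - D
        = P⁻¹ * (algebraMap ℂ (Matrix (Fin d) (Fin d) ℂ) (dg i) - B) * P := by
      rw [hBPD, Matrix.mul_sub, Matrix.sub_mul]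
      congr 1
      · rw [Algebra.algebraMap_eq_smul_one, Matrix.mul_smul, Matrix.smul_mul,
          mul_one, hPP']
      · rw [show P⁻¹ * (P * D * P⁻¹) * P = P⁻¹ * P * D * (P⁻¹ * P) by noncomm_ring,
          hPP', one_mul, mul_one]
    have hUnit2 : IsUnit (algebraMap ℂ (Matrix (Fin d) (Fin d) ℂ) (dg i) - D) := by
      rw [h1]
      have hPinvU : IsUnit P⁻¹ :=
        (Matrix.isUnit_iff_isUnit_det _).2 (Matrix.isUnit_nonsing_inv_det P hPdet)
      exact (hPinvU.mul hUnit).mul hP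
    have hdiagform : algebraMap ℂ (Matrix (Fin d) (Fin d) ℂ) (dg i) - D
        = Matrix.diagonal (fun k => dg i - dg k) := by
      rw [← hDdiag]
      ext a b
      by_cases hab : a = b
      · subst hab
        simp [Matrix.algebraMap_matrix_apply, Matrix.diagonal_apply_eq]
      · simp [Matrix.algebraMap_matrix_apply, Matrix.diagonal_apply_ne _ hab,
          Matrix.sub_apply, hab]
    have hdet : (algebraMap ℂ (Matrix (Fin d) (Fin d) ℂ) (dg i) - D).det = 0 := by
      rw [hdiagform, Matrix.det_diagonal]
      exact Finset.prod_eq_zero (Finset.mem_univ i) (sub_self _)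
    have := (Matrix.isUnit_iff_isUnit_det _).1 hUnit2
    rw [hdet] at this
    exact this.ne_zero rfl
  have hψ' : (P * Matrix.diagonal dg * P⁻¹).mulVec ψ = 0 := by rw [← hB]; exact hψ
  set q' : ℝ → ℝ := fun x => q (max x₀ x) with hq'_def
  have hq'c : Continuous q' :=
    hq.comp_continuous (continuous_const.max continuous_id) fun x => Set.mem_Ici.2 (le_max_left _ _)
  have hq'0 : ∀ x, 0 ≤ q' x := fun x => hq0 _ (Set.mem_Ici.2 (le_max_left _ _))
  set A' : ℝ → Matrix (Fin d) (Fin d) ℂ := fun x => A (max x₀ x) with hA'_def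
  have hA'c : Continuous A' :=
    hA.comp_continuous (continuous_const.max continuous_id) fun x => Set.mem_Ici.2 (le_max_left _ _)
  have hA'I : IntegrableOn (fun y => ‖A' y‖) (Set.Ici x₀) := by
    refine hAint.congr_fun ?_ measurableSet_Ici
    intro y hy
    simp only [hA'_def, max_eq_right (Set.mem_Ici.1 hy)]
  have hq'eq : ∀ x, x₀ ≤ x → q' x = q x := fun x hx => by
    simp only [hq'_def, max_eq_right hx]
  have hA'eq : ∀ x, x₀ ≤ x → A' x = A x := fun x hx => by
    simp only [hA'_def, max_eq_right hx]
  obtain ⟨Φ, ⟨hbdd, hode, hlim⟩, huniq⟩ :=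
    BSEU.core P P⁻¹ dg hPP hPP' hdgre ψ hψ' x₀ q' hq'c hq'0 A' hA'c hA'I
  refine ⟨Φ, ⟨hbdd, ?_, hlim⟩, ?_⟩
  · intro x hx
    have h := hode x hx
    rw [hq'eq x hx, hA'eq x hx, ← hB] at h
    exact h
  · rintro Φ' ⟨hb', hode', hlim'⟩
    refine huniq Φ' ⟨hb', ?_, hlim'⟩
    intro x hx
    have h := hode' x hx
    rw [← hq'eq x hx, ← hA'eq x hx, hB] at h
    exact h
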